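/- Context Tree Weighting computes the Bayesian mixture: at the root λ of a depth-D context tree, the weighted probability satisfies P^λ_w(x_{1:t} | a_{1:t}) = ∑_{M ∈ C_D} 2^{−Γ_D(M)} Pr(x_{1:t} | M, a_{1:t}), where Pr(x_{1:t} | M, a_{1:t}) = ∏_{l ∈ L(M)} Pr_kt(subsequence of bits of x_{1:t} routed to leaf l of M). -/
import Mathlib


/-- KT conditional probability of the next bit. -/
noncomputable def ktCond (a b : ℕ) (y : Bool) : ℝ :=
  if y then ((b : ℝ) + 1/2) / ((a : ℝ) + (b : ℝ) + 1)
  else ((a : ℝ) + 1/2) / ((a : ℝ) + (b : ℝ) + 1)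

noncomputable def ktBlockAux : ℕ → ℕ → List Bool → ℝ
  | _, _, [] => 1
  | a, b, y :: ys =>
      ktCond a b y * ktBlockAux (if y then a else a + 1) (if y then b + 1 else b) ys

/-- KT block probability `Pr_kt`. -/
noncomputable def ktBlock (s : List Bool) : ℝ := ktBlockAux 0 0 s

/-- A model of a prediction suffix tree. -/
inductive BinTree where
  | leaf : BinTree
  | node : BinTree → BinTree → BinTree
deriving DecidableEq

namespace BinTree

def depth : BinTree → ℕ
  | leaf => 0
  | node l r => max l.depth r.depth + 1

def numNodes : BinTree → ℕ
  | leaf => 1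
  | node l r => l.numNodes + r.numNodes + 1

def leavesAt : ℕ → BinTree → ℕ
  | 0, leaf => 1
  | 0, node _ _ => 0
  | _ + 1, leaf => 0
  | d + 1, node l r => leavesAt d l + leavesAt d r

/-- `Γ_D(M)`: nodes of `M` minus leaves of `M` at depth `D`. -/
def cost (D : ℕ) (M : BinTree) : ℕ := M.numNodes - leavesAt D M

end BinTree

/- `rt s` denotes the subsequence of the bits of `x_{1:t}` routed (by the
action-conditional context of `a_{1:t}` and `x_{1:t}`) to the context-tree node
with path description `s`. -/

/-- The CTW weighted probability `P^n_w` at a node with path `s` and remaining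
depth `k`: `P^n_w = Pr_kt` at leaves, and
`P^n_w = ½·Pr_kt + ½·P^{n_l}_w·P^{n_r}_w` at internal nodes. -/
noncomputable def Pw (rt : List Bool → List Bool) : ℕ → List Bool → ℝ
  | 0, s => ktBlock (rt s)
  | k + 1, s =>
      (1/2) * ktBlock (rt s) +
        (1/2) * (Pw rt k (s ++ [true]) * Pw rt k (s ++ [false]))

/-- `Pr(x_{1:t} | M, a_{1:t})` for a tree model `M` rooted at path `s`:
the product over the leaves `l` of `M` of the KT block probabilities of the
bits routed to the node with path `p(s)p(l)`. -/
noncomputable def modelProb (rt : List Bool → List Bool) : BinTree → List Bool → ℝ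
  | .leaf, s => ktBlock (rt s)
  | .node l r, s => modelProb rt l (s ++ [true]) * modelProb rt r (s ++ [false])

namespace BinTree

lemma leavesAt_le_numNodes (M : BinTree) : ∀ d, leavesAt d M ≤ numNodes M := by
  induction M with
  | leaf => intro d; cases d <;> simp [leavesAt, numNodes]
  | node l r ihl ihr =>
    intro d
    cases d with
    | zero => simp [leavesAt, numNodes]
    | succ d =>
      simp only [leavesAt, numNodes]
      have := ihl d; have := ihr d; omega

/-- All trees of depth ≤ D. -/
def treesUpTo : ℕ → Finset BinTree
  | 0 => {leaf}
  | k + 1 => insert leaf ((treesUpTo k ×ˢ treesUpTo k).image fun p => node p.1 p.2)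

lemma mem_treesUpTo : ∀ (D : ℕ) (M : BinTree), M ∈ treesUpTo D ↔ M.depth ≤ D := by
  intro D
  induction D with
  | zero =>
    intro M; cases M <;> simp [treesUpTo, depth]
  | succ k ih =>
    intro M
    cases M with
    | leaf => simp [treesUpTo, depth]
    | node l r =>
      simp only [treesUpTo, Finset.mem_insert, Finset.mem_image, Finset.mem_product,
        Prod.exists, depth]
      constructor
      · rintro (h | ⟨a, b, ⟨ha, hb⟩, h⟩)
        · exact absurd h (by simp)
        · obtain ⟨h1, h2⟩ : a = l ∧ b = r := by
            injection h with h1 h2; exact ⟨h1, h2⟩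
          have ha' := (ih a).1 ha
          have hb' := (ih b).1 hb
          subst h1; subst h2
          exact Nat.succ_le_succ (max_le ha' hb')
      · intro h
        have h' := Nat.succ_le_succ_iff.mp h
        right
        exact ⟨l, r, ⟨(ih l).2 (le_trans (le_max_left _ _) h'),
          (ih r).2 (le_trans (le_max_right _ _) h')⟩, rfl⟩

lemma cost_leaf_zero : cost 0 leaf = 0 := by simp [cost, numNodes, leavesAt]

lemma cost_leaf_succ (k : ℕ) : cost (k + 1) leaf = 1 := by simp [cost, numNodes, leavesAt]

lemma cost_node (k : ℕ) (l r : BinTree) :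
    cost (k + 1) (node l r) = cost k l + cost k r + 1 := by
  have hl := leavesAt_le_numNodes l k
  have hr := leavesAt_le_numNodes r k
  simp only [cost, numNodes, leavesAt]; omega

end BinTree

lemma ctw_sum (rt : List Bool → List Bool) (D : ℕ) : ∀ s : List Bool,
    ∑ M ∈ BinTree.treesUpTo D,
      (2 : ℝ) ^ (-(BinTree.cost D M : ℤ)) * modelProb rt M s = Pw rt D s := by
  induction D with
  | zero =>
    intro s
    simp [BinTree.treesUpTo, BinTree.cost_leaf_zero, modelProb, Pw]
  | succ k ih =>
    intro s
    have hnotmem : BinTree.leaf ∉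
        (BinTree.treesUpTo k ×ˢ BinTree.treesUpTo k).image fun p => BinTree.node p.1 p.2 := by
      simp
    rw [BinTree.treesUpTo, Finset.sum_insert hnotmem]
    have hinj : ∀ p ∈ BinTree.treesUpTo k ×ˢ BinTree.treesUpTo k,
        ∀ q ∈ BinTree.treesUpTo k ×ˢ BinTree.treesUpTo k,
        BinTree.node p.1 p.2 = BinTree.node q.1 q.2 → p = q := by
      intro p _ q _ h
      cases p; cases q
      injection h with h1 h2
      simp_all
    rw [Finset.sum_image hinj]
    have hprod : ∑ p ∈ BinTree.treesUpTo k ×ˢ BinTree.treesUpTo k,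
        (2 : ℝ) ^ (-(BinTree.cost (k+1) (BinTree.node p.1 p.2) : ℤ)) *
          modelProb rt (BinTree.node p.1 p.2) s
        = (1/2) * (Pw rt k (s ++ [true]) * Pw rt k (s ++ [false])) := by
      rw [← ih (s ++ [true]), ← ih (s ++ [false]), Finset.sum_product]
      conv_rhs => rw [Finset.sum_mul_sum]
      rw [Finset.mul_sum]
      refine Finset.sum_congr rfl fun a _ => ?_
      rw [Finset.mul_sum]
      refine Finset.sum_congr rfl fun b _ => ?_
      rw [BinTree.cost_node]
      show (2:ℝ) ^ (-((BinTree.cost k a + BinTree.cost k b + 1 : ℕ) : ℤ)) *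
        (modelProb rt a (s ++ [true]) * modelProb rt b (s ++ [false])) = _
      push_cast
      rw [neg_add, neg_add, zpow_add₀ (by norm_num : (2:ℝ) ≠ 0),
        zpow_add₀ (by norm_num : (2:ℝ) ≠ 0)]
      norm_num; ring
    rw [hprod, BinTree.cost_leaf_succ]
    show (2:ℝ) ^ (-(1:ℤ)) * ktBlock (rt s) + _ = _
    simp only [Pw]
    norm_num

/-- CTW computes the Bayesian mixture: at the root `λ` of a
depth-`D` context tree,
`P^λ_w(x_{1:t}|a_{1:t}) = ∑_{M ∈ C_D} 2^{−Γ_D(M)}·Pr(x_{1:t}|M,a_{1:t})`,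
where `Pr(x_{1:t}|M,a_{1:t}) = ∏_{l ∈ L(M)} Pr_kt(bits routed to leaf l)`. -/
theorem ctw_root_mixture (rt : List Bool → List Bool) (D : ℕ) :
    HasSum
      (fun M : {M : BinTree // M.depth ≤ D} =>
        (2 : ℝ) ^ (-(BinTree.cost D M.1 : ℤ)) * modelProb rt M.1 [])
      (Pw rt D []) := by
  have h := (BinTree.treesUpTo D).hasSum
    (fun M => (2 : ℝ) ^ (-(BinTree.cost D M : ℤ)) * modelProb rt M [])
  rw [ctw_sum rt D []] at h
  exact ((Equiv.subtypeEquivRight fun M => (BinTree.mem_treesUpTo D M)).hasSum_iff).mp h
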